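/- arXiv:1501.04317 — 2 statements merged into one kernel-verified Lean document; each statement's English description precedes it below -/
import Mathlib

section
/- Suppose q : ℝ → ℝ^N is a twice continuously differentiable solution of the closed-loop system ρ·q̈ + (C + U·C̃)·q̇ + K·q = 0 with the feedback U(t) = u_max·s(t)/√(1 + s(t)²), s(t) = q̇(t)ᵀC̃q̇(t). Then there exists c > 0 such that c·(|q(t)|² + |q̇(t)|²) ≤ V(q(0), q̇(0)) for all t ≥ 0; in particular q and q̇ are bounded on [0, ∞). -/
open Matrix Filter

/-- Lyapunov function `V(q,p) = (ρ/2) pᵀp + (1/2) qᵀKq`. -/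
noncomputable def V {N : ℕ} (ρ : ℝ) (K : Matrix (Fin N) (Fin N) ℝ)
    (q p : Fin N → ℝ) : ℝ :=
  ρ / 2 * (p ⬝ᵥ p) + 1 / 2 * (q ⬝ᵥ K.mulVec q)

lemma dot_hasDerivAt {N : ℕ} {f g : ℝ → Fin N → ℝ} {u v : Fin N → ℝ} {t : ℝ}
    (hf : HasDerivAt f u t) (hg : HasDerivAt g v t) :
    HasDerivAt (fun t => f t ⬝ᵥ g t) (u ⬝ᵥ g t + f t ⬝ᵥ v) t := by
  simp only [dotProduct]
  rw [← Finset.sum_add_distrib]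
  exact HasDerivAt.fun_sum fun i _ =>
    ((hasDerivAt_pi.mp hf i).mul (hasDerivAt_pi.mp hg i))

lemma mulVec_hasDerivAt {N : ℕ} (M : Matrix (Fin N) (Fin N) ℝ) {g : ℝ → Fin N → ℝ}
    {v : Fin N → ℝ} {t : ℝ} (hg : HasDerivAt g v t) :
    HasDerivAt (fun t => M.mulVec (g t)) (M.mulVec v) t :=
  (M.mulVecLin.toContinuousLinearMap.hasFDerivAt.comp_hasDerivAt t hg)

lemma dotM_hasDerivAt {N : ℕ} (M : Matrix (Fin N) (Fin N) ℝ) {f g : ℝ → Fin N → ℝ}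
    {u v : Fin N → ℝ} {t : ℝ} (hf : HasDerivAt f u t) (hg : HasDerivAt g v t) :
    HasDerivAt (fun t => f t ⬝ᵥ M.mulVec (g t))
      (u ⬝ᵥ M.mulVec (g t) + f t ⬝ᵥ M.mulVec v) t :=
  dot_hasDerivAt hf (mulVec_hasDerivAt M hg)

lemma posdef_lower {N : ℕ} (hN : 1 ≤ N) {K : Matrix (Fin N) (Fin N) ℝ} (hK : K.PosDef) :
    ∃ c > (0:ℝ), ∀ x : Fin N → ℝ, c * (x ⬝ᵥ x) ≤ x ⬝ᵥ K.mulVec x := by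
  have hdot_nonneg : ∀ x : Fin N → ℝ, 0 ≤ x ⬝ᵥ x := fun x =>
    Finset.sum_nonneg fun i _ => mul_self_nonneg _
  have hfpos : ∀ x : Fin N → ℝ, x ≠ 0 → 0 < x ⬝ᵥ K.mulVec x := by
    intro x hx
    have := hK.re_dotProduct_pos hx
    simpa using this
  set f : (Fin N → ℝ) → ℝ := fun x => x ⬝ᵥ K.mulVec x with hf
  have hfcont : Continuous f := continuous_id.dotProduct
    (continuous_const.matrix_mulVec continuous_id)
  set S : Set (Fin N → ℝ) := {x | x ⬝ᵥ x = 1} with hS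
  have hclosed : IsClosed S :=
    isClosed_eq (continuous_id.dotProduct continuous_id) continuous_const
  have hbdd : Bornology.IsBounded S := by
    apply Bornology.IsBounded.subset (Metric.isBounded_closedBall (x := (0 : Fin N → ℝ)) (r := 1))
    intro x hx
    simp only [Metric.mem_closedBall, dist_zero_right]
    rw [pi_norm_le_iff_of_nonneg (by norm_num)]
    intro i
    rw [Real.norm_eq_abs, abs_le]
    have h1 : x i * x i ≤ 1 := by
      rw [← hx]
      exact Finset.single_le_sum (f := fun j => x j * x j)
        (fun j _ => mul_self_nonneg _) (Finset.mem_univ i)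
    constructor <;> nlinarith
  have hcomp : IsCompact S := Metric.isCompact_of_isClosed_isBounded hclosed hbdd
  have hne : S.Nonempty := by
    refine ⟨Pi.single ⟨0, hN⟩ 1, ?_⟩
    simp [hS, dotProduct, Pi.single_apply]
  obtain ⟨x0, hx0S, hmin⟩ := hcomp.exists_isMinOn hne hfcont.continuousOn
  have hx0ne : x0 ≠ 0 := by
    intro h
    rw [h] at hx0S
    simp [hS, dotProduct] at hx0S
  refine ⟨f x0, hfpos x0 hx0ne, ?_⟩
  intro x
  by_cases hx : x = 0
  · simp [hx, hf, dotProduct]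
  · have hxx : 0 < x ⬝ᵥ x := by
      rcases lt_or_eq_of_le (hdot_nonneg x) with h | h
      · exact h
      · exfalso
        apply hx
        funext i
        by_contra hi
        have h1 : 0 < x i * x i := mul_self_pos.mpr hi
        have h2 : x i * x i ≤ x ⬝ᵥ x := Finset.single_le_sum (f := fun j => x j * x j)
          (fun j _ => mul_self_nonneg _) (Finset.mem_univ i)
        linarith
    set r : ℝ := Real.sqrt (x ⬝ᵥ x) with hr
    have hrpos : 0 < r := Real.sqrt_pos.mpr hxx
    have hr2 : r * r = x ⬝ᵥ x := Real.mul_self_sqrt (le_of_lt hxx)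
    have hyS : r⁻¹ • x ∈ S := by
      simp only [hS, Set.mem_setOf_eq, smul_dotProduct, dotProduct_smul, smul_eq_mul]
      field_simp
      nlinarith
    have hy : f x0 ≤ f (r⁻¹ • x) := hmin hyS
    have hfy : f (r⁻¹ • x) = r⁻¹ * r⁻¹ * f x := by
      simp only [hf, Matrix.mulVec_smul, smul_dotProduct, dotProduct_smul, smul_eq_mul]
      ring
    rw [hfy] at hy
    have : f x0 * (r * r) ≤ f x := by
      have hr2pos : 0 < r * r := by positivity
      calc f x0 * (r * r) ≤ (r⁻¹ * r⁻¹ * f x) * (r * r) := by nlinarith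
        _ = f x := by field_simp
    rw [← hr2]
    linarith

/-- Along any C² solution of the closed-loop system
`ρ q̈ + (C + U C̃) q̇ + K q = 0` with feedback `U t = u_max s t / √(1 + s t ^ 2)`,
`s t = q̇ᵀ C̃ q̇`, there exists `c > 0` with
`c (|q t|² + |q̇ t|²) ≤ V(q 0, q̇ 0)` for all `t ≥ 0` (here `|x|² = xᵀx` is the
squared Euclidean norm); in particular `q` and `q̇` are bounded on `[0,∞)`. -/
theorem stmt_5 (N : ℕ) (hN : 1 ≤ N) (ρ u_max : ℝ) (hρ : 0 < ρ) (hu : 0 < u_max)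
    (C Ct K : Matrix (Fin N) (Fin N) ℝ)
    (hC : C.PosSemidef) (hCt : Ct.PosDef) (hK : K.PosDef)
    (q : ℝ → Fin N → ℝ) (hq : ContDiff ℝ 2 q)
    (U s : ℝ → ℝ)
    (hs : ∀ t, s t = deriv q t ⬝ᵥ Ct.mulVec (deriv q t))
    (hU : ∀ t, U t = u_max * s t / Real.sqrt (1 + s t ^ 2))
    (hode : ∀ t, ρ • deriv (deriv q) t + C.mulVec (deriv q t)
        + U t • Ct.mulVec (deriv q t) + K.mulVec (q t) = 0) :
    (∃ c > (0:ℝ), ∀ t ≥ (0:ℝ),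
        c * (q t ⬝ᵥ q t + deriv q t ⬝ᵥ deriv q t) ≤ V ρ K (q 0) (deriv q 0)) ∧
    ∃ M : ℝ, ∀ t ≥ (0:ℝ),
        Real.sqrt (q t ⬝ᵥ q t) ≤ M ∧ Real.sqrt (deriv q t ⬝ᵥ deriv q t) ≤ M := by
  have hdot_nonneg : ∀ x : Fin N → ℝ, 0 ≤ x ⬝ᵥ x := fun x =>
    Finset.sum_nonneg fun i _ => mul_self_nonneg _
  obtain ⟨cK, hcK, hcKle⟩ := posdef_lower hN hK
  have hqd : Differentiable ℝ q := hq.differentiable (by norm_num)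
  have hq2 : ContDiff ℝ ((1:ℕ∞)+1) q := by exact_mod_cast hq
  have hq'd : Differentiable ℝ (deriv q) :=
    (contDiff_succ_iff_deriv.mp hq2).2.2.differentiable (by norm_num)
  have h1 : ∀ t, HasDerivAt q (deriv q t) t := fun t => (hqd t).hasDerivAt
  have h2 : ∀ t, HasDerivAt (deriv q) (deriv (deriv q) t) t := fun t => (hq'd t).hasDerivAt
  have hKT : Kᵀ = K := by
    rw [← Matrix.conjTranspose_eq_transpose_of_trivial]; exact hK.1
  set g : ℝ → ℝ := fun t => V ρ K (q t) (deriv q t) with hg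
  have hgd : ∀ t, HasDerivAt g (-(deriv q t ⬝ᵥ C.mulVec (deriv q t)) - U t * s t) t := by
    intro t
    have hd1 := dot_hasDerivAt (h2 t) (h2 t)
    have hd2 := dotM_hasDerivAt K (h1 t) (h1 t)
    have hder := ((hd1.const_mul (ρ/2)).add (hd2.const_mul (1/2)))
    have heq : (fun t => ρ/2 * (deriv q t ⬝ᵥ deriv q t) + 1/2 * (q t ⬝ᵥ K.mulVec (q t))) = g := by
      funext t; simp [hg, V]
    have hder : HasDerivAt (fun t => ρ/2 * (deriv q t ⬝ᵥ deriv q t) + 1/2 * (q t ⬝ᵥ K.mulVec (q t))) _ t := hder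
    rw [heq] at hder
    convert hder using 1
    have hsym : q t ⬝ᵥ K.mulVec (deriv q t) = deriv q t ⬝ᵥ K.mulVec (q t) := by
      rw [Matrix.dotProduct_mulVec, ← Matrix.mulVec_transpose, hKT, dotProduct_comm]
    have hcomm : deriv (deriv q) t ⬝ᵥ deriv q t = deriv q t ⬝ᵥ deriv (deriv q) t :=
      dotProduct_comm _ _
    have hode' : ρ • deriv (deriv q) t + K.mulVec (q t)
        = -(C.mulVec (deriv q t) + U t • Ct.mulVec (deriv q t)) := by
      have := hode t; linear_combination (norm := module) this
    have key : deriv q t ⬝ᵥ (ρ • deriv (deriv q) t + K.mulVec (q t))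
        = -(deriv q t ⬝ᵥ C.mulVec (deriv q t)) - U t * s t := by
      rw [hode', hs t]
      simp [dotProduct_add, dotProduct_smul, dotProduct_neg]
      ring
    rw [dotProduct_add, dotProduct_smul] at key
    rw [← key, hcomm, hsym]
    simp only [smul_eq_mul]
    ring
  have hgdiff : Differentiable ℝ g := fun t => (hgd t).differentiableAt
  have hspos : ∀ t, 0 ≤ s t := by
    intro t
    rw [hs t]
    have := hCt.posSemidef.re_dotProduct_nonneg (deriv q t)
    simpa using this
  have hUpos : ∀ t, 0 ≤ U t := by
    intro t
    rw [hU t]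
    apply div_nonneg (mul_nonneg hu.le (hspos t)) (Real.sqrt_nonneg _)
  have hCpos : ∀ t, 0 ≤ deriv q t ⬝ᵥ C.mulVec (deriv q t) := by
    intro t
    have := hC.re_dotProduct_nonneg (deriv q t)
    simpa using this
  have hanti : AntitoneOn g (Set.Ici 0) := by
    apply antitoneOn_of_deriv_nonpos (convex_Ici 0) hgdiff.continuous.continuousOn
      hgdiff.differentiableOn
    intro x _
    rw [(hgd x).deriv]
    have := hCpos x
    have := mul_nonneg (hUpos x) (hspos x)
    linarith
  have hgle : ∀ t ≥ (0:ℝ), g t ≤ V ρ K (q 0) (deriv q 0) := fun t ht =>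
    hanti Set.self_mem_Ici ht ht
  set c : ℝ := min (ρ/2) (cK/2) with hc
  have hcpos : 0 < c := lt_min (by linarith) (by linarith)
  have hmain : ∀ t ≥ (0:ℝ),
      c * (q t ⬝ᵥ q t + deriv q t ⬝ᵥ deriv q t) ≤ V ρ K (q 0) (deriv q 0) := by
    intro t ht
    have h1 := hgle t ht
    have h2 : cK * (q t ⬝ᵥ q t) ≤ q t ⬝ᵥ K.mulVec (q t) := hcKle (q t)
    have h3 : g t = ρ/2 * (deriv q t ⬝ᵥ deriv q t) + 1/2 * (q t ⬝ᵥ K.mulVec (q t)) := by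
      simp [hg, V]
    have h4 : c ≤ ρ/2 := min_le_left _ _
    have h5 : c ≤ cK/2 := min_le_right _ _
    have h6 := hdot_nonneg (q t)
    have h7 := hdot_nonneg (deriv q t)
    nlinarith
  refine ⟨⟨c, hcpos, hmain⟩, ?_⟩
  refine ⟨Real.sqrt (V ρ K (q 0) (deriv q 0) / c), ?_⟩
  intro t ht
  have h1 := hmain t ht
  have h6 := hdot_nonneg (q t)
  have h7 := hdot_nonneg (deriv q t)
  have hq' : q t ⬝ᵥ q t ≤ V ρ K (q 0) (deriv q 0) / c := by
    rw [le_div_iff₀ hcpos]; nlinarith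
  have hp' : deriv q t ⬝ᵥ deriv q t ≤ V ρ K (q 0) (deriv q 0) / c := by
    rw [le_div_iff₀ hcpos]; nlinarith
  exact ⟨Real.sqrt_le_sqrt hq', Real.sqrt_le_sqrt hp'⟩
end

section
/- Suppose q : ℝ → ℝ^N is a twice continuously differentiable solution of ρ·q̈ + (C + U·C̃)·q̇ + K·q = U(t)·F̃(t) (i.e., F ≡ 0), where |F̃(t)| ≤ F̃_max for all t, and the control is U = u_nom + v₁ with u_nom(t) = u_max_p·s(t)/√(1 + s(t)²), T₁(t) = F̃_max·|q̇(t)|·(v_1max + u_max_p), and v₁(t) = v_1max·T₁(t)·s(t)/√(1 + T₁(t)²·s(t)²), where s(t) = q̇(t)ᵀC̃q̇(t) and u_max_p, v_1max > 0. Then for all t, d/dt V(q(t), q̇(t)) ≤ T₁(t)·(1 − v_1max·s(t)²/√(1 + T₁(t)²·s(t)²)). -/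
open Matrix Filter

private lemma hasDerivAt_dot {N : ℕ} {f g : ℝ → Fin N → ℝ} {f' g' : Fin N → ℝ} {t : ℝ}
    (hf : HasDerivAt f f' t) (hg : HasDerivAt g g' t) :
    HasDerivAt (fun τ => f τ ⬝ᵥ g τ) (f' ⬝ᵥ g t + f t ⬝ᵥ g') t := by
  have h : HasDerivAt (fun τ => ∑ i, f τ i * g τ i)
      (∑ i : Fin N, (f' i * g t i + f t i * g' i)) t :=
    HasDerivAt.fun_sum fun i _ => (hasDerivAt_pi.1 hf i).mul (hasDerivAt_pi.1 hg i)
  simpa [dotProduct, Finset.sum_add_distrib] using h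

private lemma hasDerivAt_mulVec' {N : ℕ} (A : Matrix (Fin N) (Fin N) ℝ)
    {f : ℝ → Fin N → ℝ} {f' : Fin N → ℝ} {t : ℝ} (hf : HasDerivAt f f' t) :
    HasDerivAt (fun τ => A.mulVec (f τ)) (A.mulVec f') t := by
  rw [hasDerivAt_pi]
  intro i
  have h : HasDerivAt (fun τ => ∑ j, A i j * f τ j) (∑ j : Fin N, A i j * f' j) t :=
    HasDerivAt.fun_sum fun j _ => (hasDerivAt_pi.1 hf j).const_mul (A i j)
  simpa [Matrix.mulVec, dotProduct] using h

private lemma dot_le_sqrt_mul {N : ℕ} (f g : Fin N → ℝ) :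
    f ⬝ᵥ g ≤ Real.sqrt (f ⬝ᵥ f) * Real.sqrt (g ⬝ᵥ g) := by
  simpa [dotProduct, pow_two] using Real.sum_mul_le_sqrt_mul_sqrt Finset.univ f g

private lemma abs_dot_le {N : ℕ} (f g : Fin N → ℝ) :
    |f ⬝ᵥ g| ≤ Real.sqrt (f ⬝ᵥ f) * Real.sqrt (g ⬝ᵥ g) := by
  rcases abs_cases (f ⬝ᵥ g) with ⟨h, _⟩ | ⟨h, _⟩
  · rw [h]; exact dot_le_sqrt_mul f g
  · rw [h]
    have := dot_le_sqrt_mul (-f) g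
    simpa [neg_dotProduct] using this

/-- Along any C² solution of
`ρ q̈ + (C + U C̃) q̇ + K q = U(t) F̃(t)` (i.e. `F ≡ 0`) with `|F̃(t)| ≤ F̃max`
(Euclidean norm) and the control `U = u_nom + v₁`, where
`u_nom t = u_max_p s t / √(1 + s t ^ 2)`,
`T₁ t = F̃max |q̇ t| (v_1max + u_max_p)`, and
`v₁ t = v_1max T₁ t s t / √(1 + T₁ t ^ 2 s t ^ 2)` with `s t = q̇ᵀ C̃ q̇` and
`u_max_p, v_1max > 0`, one has for all `t`:
`d/dt V(q t, q̇ t) ≤ T₁ t (1 − v_1max s t ^ 2 / √(1 + T₁ t ^ 2 s t ^ 2))`. -/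
theorem stmt_9 (N : ℕ) (hN : 1 ≤ N) (ρ : ℝ) (hρ : 0 < ρ)
    (u_max_p v_1max : ℝ) (hump : 0 < u_max_p) (hv1 : 0 < v_1max)
    (C Ct K : Matrix (Fin N) (Fin N) ℝ)
    (hC : C.PosSemidef) (hCt : Ct.PosDef) (hK : K.PosDef)
    (q : ℝ → Fin N → ℝ) (hq : ContDiff ℝ 2 q)
    (Ft : ℝ → Fin N → ℝ) (hFtc : Continuous Ft)
    (Ftmax : ℝ) (hFtb : ∀ t, Real.sqrt (Ft t ⬝ᵥ Ft t) ≤ Ftmax)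
    (s T₁ u_nom v₁ U : ℝ → ℝ)
    (hs : ∀ t, s t = deriv q t ⬝ᵥ Ct.mulVec (deriv q t))
    (hT₁ : ∀ t, T₁ t = Ftmax * Real.sqrt (deriv q t ⬝ᵥ deriv q t) * (v_1max + u_max_p))
    (hunom : ∀ t, u_nom t = u_max_p * s t / Real.sqrt (1 + s t ^ 2))
    (hv₁ : ∀ t, v₁ t = v_1max * T₁ t * s t / Real.sqrt (1 + T₁ t ^ 2 * s t ^ 2))
    (hU : ∀ t, U t = u_nom t + v₁ t)
    (hode : ∀ t, ρ • deriv (deriv q) t + C.mulVec (deriv q t)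
        + U t • Ct.mulVec (deriv q t) + K.mulVec (q t) = U t • Ft t) :
    ∀ t, deriv (fun τ => V ρ K (q τ) (deriv q τ)) t
      ≤ T₁ t * (1 - v_1max * s t ^ 2 / Real.sqrt (1 + T₁ t ^ 2 * s t ^ 2)) := by
  intro t
  -- regularity
  have hreg := (contDiff_succ_iff_deriv (n := 1)).mp (by norm_num [one_add_one_eq_two]; exact hq)
  have hq1 : Differentiable ℝ q := hreg.1
  have hq2 : Differentiable ℝ (deriv q) := hreg.2.2.differentiable one_ne_zero
  set p : Fin N → ℝ := deriv q t with hp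
  set a : Fin N → ℝ := deriv (deriv q) t with ha
  have hdq : HasDerivAt q p t := (hq1 t).hasDerivAt
  have hdp : HasDerivAt (deriv q) a t := (hq2 t).hasDerivAt
  -- symmetry of K
  have hKT : Kᵀ = K := by simpa using hK.1.eq
  have hKsym : q t ⬝ᵥ K.mulVec p = p ⬝ᵥ K.mulVec (q t) := by
    rw [dotProduct_mulVec, ← Matrix.mulVec_transpose, hKT, dotProduct_comm]
  -- derivative of V along the trajectory
  have hV : HasDerivAt (fun τ => V ρ K (q τ) (deriv q τ))
      (ρ * (p ⬝ᵥ a) + p ⬝ᵥ K.mulVec (q t)) t := by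
    have h1 : HasDerivAt (fun τ => deriv q τ ⬝ᵥ deriv q τ) (a ⬝ᵥ p + p ⬝ᵥ a) t :=
      hasDerivAt_dot hdp hdp
    have h2 : HasDerivAt (fun τ => q τ ⬝ᵥ K.mulVec (q τ))
        (p ⬝ᵥ K.mulVec (q t) + q t ⬝ᵥ K.mulVec p) t :=
      hasDerivAt_dot hdq (hasDerivAt_mulVec' K hdq)
    have := (h1.const_mul (ρ / 2)).add (h2.const_mul ((1:ℝ) / 2))
    simp only [V]
    refine this.congr_deriv ?_
    rw [dotProduct_comm a p, hKsym]
    ring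
  -- use the ODE to rewrite the derivative
  have hkey : ρ * (p ⬝ᵥ a) + p ⬝ᵥ C.mulVec p + U t * s t + p ⬝ᵥ K.mulVec (q t)
      = U t * (p ⬝ᵥ Ft t) := by
    have h := congrArg (fun v => p ⬝ᵥ v) (hode t)
    simpa [dotProduct_add, dotProduct_smul, smul_eq_mul, hs t, mul_comm, mul_left_comm,
      mul_assoc, add_comm, add_left_comm, add_assoc] using h
  have hderiv : deriv (fun τ => V ρ K (q τ) (deriv q τ)) t
      = U t * (p ⬝ᵥ Ft t) - p ⬝ᵥ C.mulVec p - U t * s t := by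
    rw [hV.deriv]; linarith [hkey]
  rw [hderiv]
  -- positivity facts
  have hFt0 : 0 ≤ Ftmax := le_trans (Real.sqrt_nonneg _) (hFtb t)
  have hT0 : 0 ≤ T₁ t := by
    rw [hT₁ t]
    positivity
  have hC0 : 0 ≤ p ⬝ᵥ C.mulVec p := by simpa using hC.dotProduct_mulVec_nonneg p
  -- bound |U t| ≤ u_max_p + v_1max
  have habs_unom : |u_nom t| ≤ u_max_p := by
    rw [hunom t, abs_div, abs_of_nonneg (Real.sqrt_nonneg _), abs_mul,
      abs_of_pos hump]
    rw [div_le_iff₀ (by positivity)]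
    have h1 : |s t| ≤ Real.sqrt (1 + s t ^ 2) := by
      rw [← Real.sqrt_sq_eq_abs]
      exact Real.sqrt_le_sqrt (by nlinarith)
    nlinarith [abs_nonneg (s t), Real.sqrt_nonneg (1 + s t ^ 2)]
  have habs_v₁ : |v₁ t| ≤ v_1max := by
    rw [hv₁ t, abs_div, abs_of_nonneg (Real.sqrt_nonneg _), abs_mul, abs_mul,
      abs_of_pos hv1]
    rw [div_le_iff₀ (by positivity)]
    have h1 : |T₁ t| * |s t| ≤ Real.sqrt (1 + T₁ t ^ 2 * s t ^ 2) := by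
      rw [← abs_mul, ← Real.sqrt_sq_eq_abs]
      exact Real.sqrt_le_sqrt (by nlinarith)
    nlinarith [abs_nonneg (T₁ t), abs_nonneg (s t), Real.sqrt_nonneg (1 + T₁ t ^ 2 * s t ^ 2)]
  have habsU : |U t| ≤ u_max_p + v_1max := by
    rw [hU t]
    exact le_trans (abs_add_le _ _) (add_le_add habs_unom habs_v₁)
  -- bound the forcing term
  have hforce : U t * (p ⬝ᵥ Ft t) ≤ T₁ t := by
    calc U t * (p ⬝ᵥ Ft t) ≤ |U t * (p ⬝ᵥ Ft t)| := le_abs_self _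
      _ = |U t| * |p ⬝ᵥ Ft t| := abs_mul _ _
      _ ≤ (u_max_p + v_1max) * (Real.sqrt (p ⬝ᵥ p) * Ftmax) := by
          apply mul_le_mul habsU _ (abs_nonneg _) (by positivity)
          exact le_trans (abs_dot_le p (Ft t))
            (mul_le_mul_of_nonneg_left (hFtb t) (Real.sqrt_nonneg _))
      _ = T₁ t := by rw [hT₁ t]; ring
  -- the damping terms
  have hunoms : 0 ≤ u_nom t * s t := by
    rw [hunom t]
    have : u_max_p * s t / Real.sqrt (1 + s t ^ 2) * s t
        = u_max_p * s t ^ 2 / Real.sqrt (1 + s t ^ 2) := by ring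
    rw [this]
    positivity
  have hv₁s : v₁ t * s t = T₁ t * (v_1max * s t ^ 2 / Real.sqrt (1 + T₁ t ^ 2 * s t ^ 2)) := by
    rw [hv₁ t]; ring
  have hUs : U t * s t = u_nom t * s t + v₁ t * s t := by rw [hU t]; ring
  rw [hUs, hv₁s]
  have : T₁ t * (1 - v_1max * s t ^ 2 / Real.sqrt (1 + T₁ t ^ 2 * s t ^ 2))
      = T₁ t - T₁ t * (v_1max * s t ^ 2 / Real.sqrt (1 + T₁ t ^ 2 * s t ^ 2)) := by ring
  rw [this]
  linarith
end
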